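/- Let T be a rooted symmetric tree with daughter degree sequence (2, k_2, k_3, ...). Then the graceful labelling f of Theorem 1 is a weakly α-labelling of T with critical value k = h_2: for every edge xy, either f(x) ≤ h_2 ≤ f(y) or f(y) ≤ h_2 ≤ f(x). -/
import Mathlib


/-- The `i`-th level vertex size of a rooted symmetric tree with `q` levels and
daughter degree sequence `k 1, …, k (q-1)`:
`h i = 1 + ∑_{j=i}^{q-1} k i * k (i+1) * ⋯ * k j`, so `h q = 1`. -/
def hlvl (q : ℕ) (k : ℕ → ℕ) (i : ℕ) : ℕ :=
  1 + ∑ j ∈ Finset.Icc i (q - 1), ∏ t ∈ Finset.Icc i j, k t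

/-- The vertex set of a rooted symmetric tree with `q` levels: a vertex at level
`r.val + 1` is identified with its sequence of child indices `(x_1, …, x_{r.val})`
where `0 ≤ x_i < k i`. -/
def Vertex (q : ℕ) (k : ℕ → ℕ) : Type :=
  Σ r : Fin q, (i : Fin r.val) → Fin (k (i.val + 1))

instance (q : ℕ) (k : ℕ → ℕ) : Fintype (Vertex q k) := by
  unfold Vertex; infer_instance

instance (q : ℕ) (k : ℕ → ℕ) : DecidableEq (Vertex q k) := by
  unfold Vertex; infer_instance

/-- The (1-based) child-index sequence of a vertex, extended by `0`. -/
def seqOf {q : ℕ} {k : ℕ → ℕ} (v : Vertex q k) (i : ℕ) : ℕ :=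
  if h : i - 1 < v.1.val then (v.2 ⟨i - 1, h⟩).val else 0

/-- Level of a vertex (root has level 1). -/
def level {q : ℕ} {k : ℕ → ℕ} (v : Vertex q k) : ℕ := v.1.val + 1

/-- Odd-level value of the labelling of Theorem 1. -/
def fOdd (q : ℕ) (k : ℕ → ℕ) (x : ℕ → ℕ) (r : ℕ) : ℕ :=
  ∑ i ∈ Finset.Icc 1 (r - 1), x i * hlvl q k (i + 1) + (r - 1) / 2

/-- Even-level value of the labelling of Theorem 1. -/
def fEven (q : ℕ) (k : ℕ → ℕ) (x : ℕ → ℕ) (r : ℕ) : ℕ :=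
  (k 1 - x 1) * hlvl q k 2
    - ∑ i ∈ Finset.Icc 2 (r - 1), x i * hlvl q k (i + 1) - (r - 2) / 2

/-- The vertex labelling `f` of Theorem 1. -/
def flabel (q : ℕ) (k : ℕ → ℕ) (v : Vertex q k) : ℕ :=
  if Even (level v) then fEven q k (seqOf v) (level v) else fOdd q k (seqOf v) (level v)

/-- The parent of a vertex (the root is mapped to itself). -/
def parent {q : ℕ} {k : ℕ → ℕ} (v : Vertex q k) : Vertex q k :=
  ⟨⟨v.1.val - 1, by have := v.1.isLt; omega⟩,
    fun i => v.2 (Fin.castLE (Nat.sub_le _ _) i)⟩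

/-- The induced edge label on the edge joining `v` (non-root) to its parent. -/
def glabel (q : ℕ) (k : ℕ → ℕ) (v : Vertex q k) : ℕ :=
  ((flabel q k v : ℤ) - (flabel q k (parent v) : ℤ)).natAbs


namespace WA

variable (q : ℕ) (k : ℕ → ℕ)

lemma hlvl_pos (s : ℕ) : 1 ≤ hlvl q k s := Nat.le_add_right 1 _

lemma hlvl_rec (s : ℕ) (hsq : s + 1 ≤ q) : hlvl q k s = 1 + k s * hlvl q k (s + 1) := by
  unfold hlvl
  have hsq' : s ≤ q - 1 := by omega
  have h1 : Finset.Icc s (q - 1) = insert s (Finset.Icc (s + 1) (q - 1)) := by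
    rw [Finset.Icc_add_one_left_eq_Ioc, Finset.Ioc_insert_left hsq']
  rw [h1, Finset.sum_insert (by simp [Finset.mem_Icc])]
  rw [Finset.Icc_self, Finset.prod_singleton]
  have h2 : ∀ j ∈ Finset.Icc (s + 1) (q - 1),
      ∏ t ∈ Finset.Icc s j, k t = k s * ∏ t ∈ Finset.Icc (s + 1) j, k t := by
    intro j hj
    have hj' : s ≤ j := le_trans (Nat.le_succ s) (Finset.mem_Icc.1 hj).1
    rw [show Finset.Icc s j = insert s (Finset.Icc (s + 1) j) by
      rw [Finset.Icc_add_one_left_eq_Ioc, Finset.Ioc_insert_left hj'],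
      Finset.prod_insert (by simp [Finset.mem_Icc])]
  rw [Finset.sum_congr rfl h2, ← Finset.mul_sum]
  ring

/-- integer sum term -/
def SZ (s d : ℕ) (x : ℕ → ℕ) : ℤ :=
  ∑ i ∈ Finset.Icc s (s + d - 1), (x i : ℤ) * (hlvl q k (i + 1) : ℤ)

/-- integer subtree labelling -/
def PsiZ (s d : ℕ) (x : ℕ → ℕ) : ℤ :=
  if Even d then (hlvl q k s : ℤ) - SZ q k s d x - ((d / 2 : ℕ) : ℤ)
  else SZ q k s d x + (((d + 1) / 2 : ℕ) : ℤ)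

def DZ (s d : ℕ) (x : ℕ → ℕ) : ℤ := PsiZ q k s d x - PsiZ q k s (d - 1) x

lemma SZ_congr {s d : ℕ} {x x' : ℕ → ℕ} (hs : 1 ≤ s)
    (h : ∀ i, s ≤ i → i + 1 ≤ s + d → x i = x' i) : SZ q k s d x = SZ q k s d x' := by
  unfold SZ
  refine Finset.sum_congr rfl ?_
  intro i hi
  rw [Finset.mem_Icc] at hi
  rw [h i hi.1 (by omega)]

lemma PsiZ_congr {s d : ℕ} {x x' : ℕ → ℕ} (hs : 1 ≤ s)
    (h : ∀ i, s ≤ i → i + 1 ≤ s + d → x i = x' i) : PsiZ q k s d x = PsiZ q k s d x' := by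
  unfold PsiZ; rw [SZ_congr q k hs h]

lemma DZ_congr {s d : ℕ} {x x' : ℕ → ℕ} (hs : 1 ≤ s)
    (h : ∀ i, s ≤ i → i + 1 ≤ s + d → x i = x' i) : DZ q k s d x = DZ q k s d x' := by
  unfold DZ
  rw [PsiZ_congr q k hs h, PsiZ_congr q k (x := x) (x' := x') (d := d - 1) hs
    (fun i h1 h2 => h i h1 (by omega))]

lemma PsiZ_zero (s : ℕ) (hs : 1 ≤ s) (x : ℕ → ℕ) : PsiZ q k s 0 x = (hlvl q k s : ℤ) := by
  unfold PsiZ SZ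
  rw [Finset.Icc_eq_empty (by omega)]
  simp

lemma SZ_split (s d : ℕ) (hs : 1 ≤ s) (hd : 1 ≤ d) (x : ℕ → ℕ) :
    SZ q k s d x = (x s : ℤ) * (hlvl q k (s + 1) : ℤ) + SZ q k (s + 1) (d - 1) x := by
  unfold SZ
  have h1 : Finset.Icc s (s + d - 1) = insert s (Finset.Icc (s + 1) (s + d - 1)) := by
    rw [Finset.Icc_add_one_left_eq_Ioc, Finset.Ioc_insert_left (by omega)]
  rw [h1, Finset.sum_insert (by simp [Finset.mem_Icc]),
    show s + d - 1 = s + 1 + (d - 1) - 1 by omega]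

lemma PsiZ_succ (s d : ℕ) (hs : 1 ≤ s) (hd : 1 ≤ d) (hq : s + d ≤ q) (x : ℕ → ℕ)
    (hxs : x s < k s) :
    PsiZ q k s d x = ((if Even d then (k s : ℤ) - 1 - (x s : ℤ) else (x s : ℤ)) + 1)
        * (hlvl q k (s + 1) : ℤ) + 1 - PsiZ q k (s + 1) (d - 1) x := by
  rcases Nat.even_or_odd d with he | ho
  · -- d even, d ≥ 2
    have hmod : d % 2 = 0 := Nat.even_iff.mp he
    have hd2 : 2 ≤ d := by omega
    have hrec : (hlvl q k s : ℤ) = 1 + (k s : ℤ) * (hlvl q k (s + 1) : ℤ) := by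
      have := hlvl_rec q k s (by omega)
      push_cast [this]; ring
    have hodd : ¬ Even (d - 1) := by rw [Nat.even_iff]; omega
    rw [PsiZ, PsiZ, if_pos he, if_neg hodd, SZ_split q k s d hs hd, if_pos he]
    have hdiv : ((d - 1 + 1) / 2 : ℕ) = d / 2 := by omega
    rw [hdiv, hrec]
    ring
  · have hmod : d % 2 = 1 := Nat.odd_iff.mp ho
    have hne : ¬ Even d := by rw [Nat.even_iff]; omega
    have heven : Even (d - 1) := by rw [Nat.even_iff]; omega
    rw [PsiZ, PsiZ, if_neg hne, if_pos heven, SZ_split q k s d hs hd, if_neg hne]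
    have hdiv : ((d + 1) / 2 : ℕ) = (d - 1) / 2 + 1 := by omega
    rw [hdiv]
    push_cast
    ring


lemma helperA {a H e : ℤ} (h : a * H = e) (h1 : 1 ≤ H) (h2 : -(H - 1) ≤ e) (h3 : e ≤ H - 1) :
    a = 0 ∧ e = 0 := by
  have ha : a = 0 := by
    by_contra h0
    rcases lt_or_gt_of_ne h0 with hneg | hpos
    · have : a ≤ -1 := by omega
      nlinarith [mul_le_mul_of_nonneg_right this (by omega : (0:ℤ) ≤ H)]
    · have : 1 ≤ a := by omega
      nlinarith [mul_le_mul_of_nonneg_right this (by omega : (0:ℤ) ≤ H)]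
  exact ⟨ha, by rw [ha] at h; simpa using h.symm⟩

lemma helperB {a H e : ℤ} (h : a * H = e) (h1 : 1 ≤ H) (heven : Even a)
    (h2 : -(2 * H - 2) ≤ e) (h3 : e ≤ 2 * H - 2) : a = 0 ∧ e = 0 := by
  obtain ⟨b, hb⟩ := heven
  have ha : a = 0 := by
    by_contra h0
    rcases lt_or_gt_of_ne h0 with hneg | hpos
    · have : a ≤ -2 := by omega
      nlinarith [mul_le_mul_of_nonneg_right this (by omega : (0:ℤ) ≤ H)]
    · have : 2 ≤ a := by omega
      nlinarith [mul_le_mul_of_nonneg_right this (by omega : (0:ℤ) ≤ H)]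
  exact ⟨ha, by rw [ha] at h; simpa using h.symm⟩

/-- The coefficient `a` in `DZ s d x = a * h_{s+1} - DZ (s+1) (d-1) x` for `d ≥ 2`. -/
def coA (s d : ℕ) (x : ℕ → ℕ) : ℤ :=
  if Even d then (k s : ℤ) - 1 - 2 * (x s : ℤ) else 2 * (x s : ℤ) - ((k s : ℤ) - 1)

lemma DZ_one (s : ℕ) (hs : 1 ≤ s) (hq : s + 1 ≤ q) (x : ℕ → ℕ) (hxs : x s < k s) :
    DZ q k s 1 x = ((x s : ℤ) - (k s : ℤ)) * (hlvl q k (s + 1) : ℤ) := by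
  unfold DZ
  rw [PsiZ_succ q k s 1 hs le_rfl hq x hxs, PsiZ_zero q k s hs x,
    PsiZ_zero q k (s + 1) (by omega) x]
  have hrec : (hlvl q k s : ℤ) = 1 + (k s : ℤ) * (hlvl q k (s + 1) : ℤ) := by
    have := hlvl_rec q k s hq
    push_cast [this]; ring
  rw [if_neg (by decide), hrec]
  ring

lemma DZ_succ (s d : ℕ) (hs : 1 ≤ s) (hd : 2 ≤ d) (hq : s + d ≤ q) (x : ℕ → ℕ)
    (hxs : x s < k s) :
    DZ q k s d x = coA k s d x * (hlvl q k (s + 1) : ℤ) - DZ q k (s + 1) (d - 1) x := by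
  unfold DZ
  rw [PsiZ_succ q k s d hs (by omega) hq x hxs,
    PsiZ_succ q k s (d - 1) hs (by omega) (by omega) x hxs]
  have hpar : ¬ (Even d ↔ Even (d - 1)) := by
    rw [Nat.even_iff, Nat.even_iff]; omega
  unfold coA
  rcases Nat.even_or_odd d with he | ho
  · rw [if_pos he, if_pos he, if_neg (by tauto), show d - 1 - 1 = d - 2 by omega]
    ring
  · have hmod := Nat.odd_iff.mp ho
    have hne : ¬ Even d := by rw [Nat.even_iff]; omega
    rw [if_neg hne, if_neg hne, if_pos (by tauto), show d - 1 - 1 = d - 2 by omega]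
    ring

theorem main (hk : ∀ i, 1 ≤ k i) : ∀ d s x, 1 ≤ s → s + d ≤ q →
    (∀ i, s ≤ i → i + 1 ≤ s + d → x i < k i) →
    ((1 ≤ PsiZ q k s d x ∧ PsiZ q k s d x ≤ (hlvl q k s : ℤ) ∧
      (1 ≤ d → PsiZ q k s d x ≤ (hlvl q k s : ℤ) - 1)) ∧
     (1 ≤ d → DZ q k s d x ≠ 0 ∧ -((hlvl q k s : ℤ) - 1) ≤ DZ q k s d x ∧
        DZ q k s d x ≤ (hlvl q k s : ℤ) - 1) ∧
     (∀ d' x', d' ≤ d → s + d' ≤ q → (∀ i, s ≤ i → i + 1 ≤ s + d' → x' i < k i) →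
       (PsiZ q k s d x = PsiZ q k s d' x' →
          d = d' ∧ ∀ i, s ≤ i → i + 1 ≤ s + d → x i = x' i) ∧
       (1 ≤ d → 1 ≤ d' →
          (DZ q k s d x = DZ q k s d' x' ∨ DZ q k s d x = -DZ q k s d' x') →
          d = d' ∧ ∀ i, s ≤ i → i + 1 ≤ s + d → x i = x' i))) := by
  intro d
  induction d using Nat.strong_induction_on with
  | _ d IH =>
  intro s x hs hq hx
  by_cases hd0 : d = 0
  · subst hd0
    have hz := PsiZ_zero q k s hs x
    have hp : (1:ℤ) ≤ (hlvl q k s : ℤ) := by exact_mod_cast hlvl_pos q k s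
    refine ⟨⟨by omega, by omega, by omega⟩, by omega, ?_⟩
    intro d' x' hd' _ _
    have : d' = 0 := by omega
    subst this
    exact ⟨fun _ => ⟨rfl, fun i h1 h2 => by omega⟩, fun h => by omega⟩
  · have hd1 : 1 ≤ d := by omega
    have hq1 : s + 1 ≤ q := by omega
    have hxs : x s < k s := hx s le_rfl (by omega)
    have hrec : (hlvl q k s : ℤ) = 1 + (k s : ℤ) * (hlvl q k (s + 1) : ℤ) := by
      push_cast [hlvl_rec q k s hq1]; ring
    have hH1 : (1:ℤ) ≤ (hlvl q k (s + 1) : ℤ) := by exact_mod_cast hlvl_pos q k (s + 1)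
    have hkz : (1:ℤ) ≤ (k s : ℤ) := by exact_mod_cast hk s
    have hxz : (x s : ℤ) < (k s : ℤ) := by exact_mod_cast hxs
    have hx0 : (0:ℤ) ≤ (x s : ℤ) := Int.ofNat_nonneg _
    have IHx := IH (d - 1) (by omega) (s + 1) x (by omega) (by omega)
      (fun i h1 h2 => hx i (by omega) (by omega))
    obtain ⟨⟨hm1, hm2, hm3⟩, hDxC, hPairx⟩ := IHx
    have hkey := PsiZ_succ q k s d hs hd1 hq x hxs
    set c1 : ℤ := (if Even d then (k s : ℤ) - 1 - (x s : ℤ) else ((x s : ℕ) : ℤ)) with hc1def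
    have hc1b : 0 ≤ c1 ∧ c1 ≤ (k s : ℤ) - 1 := by
      rw [hc1def]; split_ifs <;> omega
    set m : ℤ := PsiZ q k (s + 1) (d - 1) x with hmdef
    have e1 : 0 ≤ c1 * (hlvl q k (s + 1) : ℤ) := mul_nonneg hc1b.1 (by linarith)
    have e2 : (c1 + 1) * (hlvl q k (s + 1) : ℤ) ≤ (k s : ℤ) * (hlvl q k (s + 1) : ℤ) :=
      mul_le_mul_of_nonneg_right (by linarith) (by linarith)
    have hA : 1 ≤ PsiZ q k s d x ∧ PsiZ q k s d x ≤ (hlvl q k s : ℤ) ∧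
        (1 ≤ d → PsiZ q k s d x ≤ (hlvl q k s : ℤ) - 1) := by
      rw [hkey]
      refine ⟨by nlinarith [e1, e2, hm1, hm2, hrec], by nlinarith [e1, e2, hm1, hm2, hrec],
        fun _ => by nlinarith [e1, e2, hm1, hm2, hrec]⟩
    have hC : DZ q k s d x ≠ 0 ∧ -((hlvl q k s : ℤ) - 1) ≤ DZ q k s d x ∧
        DZ q k s d x ≤ (hlvl q k s : ℤ) - 1 := by
      by_cases hd2 : d = 1
      · subst hd2
        rw [DZ_one q k s hs hq1 x hxs]
        have p1 : ((x s : ℤ) - (k s : ℤ)) * (hlvl q k (s + 1) : ℤ) ≤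
            (-1) * (hlvl q k (s + 1) : ℤ) :=
          mul_le_mul_of_nonneg_right (by omega) (by linarith)
        have p2 : (-(k s : ℤ)) * (hlvl q k (s + 1) : ℤ) ≤
            ((x s : ℤ) - (k s : ℤ)) * (hlvl q k (s + 1) : ℤ) :=
          mul_le_mul_of_nonneg_right (by omega) (by linarith)
        have p3 : (1:ℤ) * (hlvl q k (s + 1) : ℤ) ≤ (k s : ℤ) * (hlvl q k (s + 1) : ℤ) :=
          mul_le_mul_of_nonneg_right hkz (by linarith)
        refine ⟨by intro h; rw [h] at p1; linarith, by linarith, by linarith⟩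
      · have hd2' : 2 ≤ d := by omega
        rw [DZ_succ q k s d hs hd2' hq x hxs]
        obtain ⟨he0, heL, heU⟩ := hDxC (by omega)
        set a : ℤ := coA k s d x with hadef
        set e : ℤ := DZ q k (s + 1) (d - 1) x with hedef
        have haB : -((k s : ℤ) - 1) ≤ a ∧ a ≤ (k s : ℤ) - 1 := by
          rw [hadef]; unfold coA; split_ifs <;> constructor <;> omega
        have p1 : a * (hlvl q k (s + 1) : ℤ) ≤ ((k s : ℤ) - 1) * (hlvl q k (s + 1) : ℤ) :=
          mul_le_mul_of_nonneg_right haB.2 (by linarith)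
        have p2 : (-((k s : ℤ) - 1)) * (hlvl q k (s + 1) : ℤ) ≤ a * (hlvl q k (s + 1) : ℤ) :=
          mul_le_mul_of_nonneg_right haB.1 (by linarith)
        have p3 : (1:ℤ) * (hlvl q k (s + 1) : ℤ) ≤ (k s : ℤ) * (hlvl q k (s + 1) : ℤ) :=
          mul_le_mul_of_nonneg_right hkz (by linarith)
        refine ⟨?_, by linarith, by linarith⟩
        intro h0
        have hae : a * (hlvl q k (s + 1) : ℤ) = e := by linarith
        have := helperA hae hH1 heL heU
        exact he0 this.2
    refine ⟨hA, fun _ => hC, ?_⟩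
    intro d' x' hd'le hq' hx'
    constructor
    · -- PsiZ injectivity
      intro heq
      by_cases hd'0 : d' = 0
      · exfalso
        rw [hd'0, PsiZ_zero q k s hs x'] at heq
        have := hA.2.2 hd1
        omega
      · have hd'1 : 1 ≤ d' := by omega
        have hx's : x' s < k s := hx' s le_rfl (by omega)
        have hx'z : (x' s : ℤ) < (k s : ℤ) := by exact_mod_cast hx's
        have hx'0 : (0:ℤ) ≤ (x' s : ℤ) := Int.ofNat_nonneg _
        have hkey' := PsiZ_succ q k s d' hs hd'1 hq' x' hx's
        set c2 : ℤ := (if Even d' then (k s : ℤ) - 1 - (x' s : ℤ) else ((x' s : ℕ) : ℤ))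
          with hc2def
        set m' : ℤ := PsiZ q k (s + 1) (d' - 1) x' with hm'def
        have IHx' := IH (d' - 1) (by omega) (s + 1) x' (by omega) (by omega)
          (fun i h1 h2 => hx' i (by omega) (by omega))
        obtain ⟨⟨hn1, hn2, _⟩, _, _⟩ := IHx'
        have hmm : (c1 - c2) * (hlvl q k (s + 1) : ℤ) = m - m' := by
          rw [hkey, hkey'] at heq
          linear_combination heq
        have hcc := helperA hmm hH1 (by omega) (by omega)
        have hc1c2 : c1 = c2 := by omega
        have hmm' : m = m' := by omega
        have htail := (hPairx (d' - 1) x' (by omega) (by omega)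
          (fun i h1 h2 => hx' i (by omega) (by omega))).1 hmm'
        have hdd : d = d' := by omega
        subst hdd
        have hxx : x s = x' s := by
          rw [hc1def, hc2def] at hc1c2
          split_ifs at hc1c2 <;> omega
        refine ⟨rfl, ?_⟩
        intro i h1 h2
        rcases eq_or_lt_of_le h1 with h | h
        · rw [← h]; exact hxx
        · exact htail.2 i (by omega) (by omega)
    · -- DZ injectivity
      intro _ hd'1 hDor
      have hx's : x' s < k s := hx' s le_rfl (by omega)
      have hx'z : (x' s : ℤ) < (k s : ℤ) := by exact_mod_cast hx's
      have hx'0 : (0:ℤ) ≤ (x' s : ℤ) := Int.ofNat_nonneg _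
      by_cases hd2 : d = 1
      · -- then d' = 1 as well
        have hd'2 : d' = 1 := by omega
        subst hd2; subst hd'2
        rw [DZ_one q k s hs hq1 x hxs, DZ_one q k s hs hq1 x' hx's] at hDor
        have hxx : x s = x' s := by
          rcases hDor with h | h
          · have h0 : ((x s : ℤ) - (x' s : ℤ)) * (hlvl q k (s + 1) : ℤ) = 0 := by
              linear_combination h
            rcases mul_eq_zero.mp h0 with h1 | h1
            · omega
            · omega
          · have h0 : ((x s : ℤ) + (x' s : ℤ) - 2 * (k s : ℤ)) *
                (hlvl q k (s + 1) : ℤ) = 0 := by linear_combination h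
            rcases mul_eq_zero.mp h0 with h1 | h1
            · omega
            · omega
        exact ⟨rfl, fun i h1 h2 => by
          have : i = s := by omega
          rw [this]; exact hxx⟩
      · have hd2' : 2 ≤ d := by omega
        obtain ⟨he0, heL, heU⟩ := hDxC (by omega)
        set a1 : ℤ := coA k s d x with ha1def
        set e1 : ℤ := DZ q k (s + 1) (d - 1) x with he1def
        rw [DZ_succ q k s d hs hd2' hq x hxs] at hDor
        by_cases hd'2 : d' = 1
        · exfalso
          subst hd'2
          rw [DZ_one q k s hs hq1 x' hx's] at hDor
          rcases hDor with h | h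
          · have h0 : (a1 - ((x' s : ℤ) - (k s : ℤ))) * (hlvl q k (s + 1) : ℤ) = e1 := by
              linear_combination h
            exact he0 (helperA h0 hH1 heL heU).2
          · have h0 : (a1 + ((x' s : ℤ) - (k s : ℤ))) * (hlvl q k (s + 1) : ℤ) = e1 := by
              linear_combination h
            exact he0 (helperA h0 hH1 heL heU).2
        · have hd'2' : 2 ≤ d' := by omega
          set a2 : ℤ := coA k s d' x' with ha2def
          set e2 : ℤ := DZ q k (s + 1) (d' - 1) x' with he2def
          rw [DZ_succ q k s d' hs hd'2' hq' x' hx's] at hDor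
          have IHx' := IH (d' - 1) (by omega) (s + 1) x' (by omega) (by omega)
            (fun i h1 h2 => hx' i (by omega) (by omega))
          obtain ⟨_, hDx'C, _⟩ := IHx'
          obtain ⟨hf0, hfL, hfU⟩ := hDx'C (by omega)
          have hparity : Even (a1 - a2) ∧ Even (a1 + a2) := by
            constructor <;>
              (rw [Int.even_iff]; rw [ha1def, ha2def]; unfold coA; split_ifs <;> omega)
          have htail : d = d' ∧ (∀ i, s + 1 ≤ i → i + 1 ≤ s + 1 + (d - 1) → x i = x' i) ∧
              ((e1 = e2 ∧ a1 = a2) ∨ e1 = -e2) := by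
            rcases hDor with h | h
            · have h0 : (a1 - a2) * (hlvl q k (s + 1) : ℤ) = e1 - e2 := by
                linear_combination h
              have hcc := helperB h0 hH1 hparity.1 (by omega) (by omega)
              have he12 : e1 = e2 := by omega
              have := (hPairx (d' - 1) x' (by omega) (by omega)
                (fun i h1 h2 => hx' i (by omega) (by omega))).2 (by omega) (by omega)
                (Or.inl he12)
              exact ⟨by omega, this.2, Or.inl ⟨he12, by omega⟩⟩
            · have h0 : (a1 + a2) * (hlvl q k (s + 1) : ℤ) = e1 + e2 := by
                linear_combination h
              have hcc := helperB h0 hH1 hparity.2 (by omega) (by omega)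
              have he12 : e1 = -e2 := by omega
              have := (hPairx (d' - 1) x' (by omega) (by omega)
                (fun i h1 h2 => hx' i (by omega) (by omega))).2 (by omega) (by omega)
                (Or.inr he12)
              exact ⟨by omega, this.2, Or.inr he12⟩
          obtain ⟨hdd, htl, hcase⟩ := htail
          rcases hcase with ⟨_, ha12⟩ | hneg
          · -- positive case: recover x s from a1 = a2
            subst hdd
            have hxx : x s = x' s := by
              rw [ha1def, ha2def] at ha12
              unfold coA at ha12
              split_ifs at ha12 <;> omega
            refine ⟨rfl, ?_⟩
            intro i h1 h2
            rcases eq_or_lt_of_le h1 with h | h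
            · rw [← h]; exact hxx
            · exact htl i (by omega) (by omega)
          · -- negative case: contradiction
            exfalso
            subst hdd
            have hE : e1 = e2 :=
              DZ_congr q k (by omega) (fun i h1 h2 => htl i h1 h2)
            omega

lemma psiinj (hk : ∀ i, 1 ≤ k i) {d d' : ℕ} {x x' : ℕ → ℕ}
    (hq1 : 2 + d ≤ q) (hq2 : 2 + d' ≤ q)
    (hx : ∀ i, 2 ≤ i → i + 1 ≤ 2 + d → x i < k i)
    (hx' : ∀ i, 2 ≤ i → i + 1 ≤ 2 + d' → x' i < k i)
    (h : PsiZ q k 2 d x = PsiZ q k 2 d' x') :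
    d = d' ∧ ∀ i, 2 ≤ i → i + 1 ≤ 2 + d → x i = x' i := by
  rcases le_total d' d with hle | hle
  · exact ((main q k hk d 2 x (by norm_num) hq1 hx).2.2 d' x' hle hq2 hx').1 h
  · have := ((main q k hk d' 2 x' (by norm_num) hq2 hx').2.2 d x hle hq1 hx).1 h.symm
    exact ⟨this.1.symm, fun i a b => (this.2 i a (by omega)).symm⟩

lemma dzinj (hk : ∀ i, 1 ≤ k i) {d d' : ℕ} {x x' : ℕ → ℕ} (hd : 1 ≤ d) (hd' : 1 ≤ d')
    (hq1 : 2 + d ≤ q) (hq2 : 2 + d' ≤ q)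
    (hx : ∀ i, 2 ≤ i → i + 1 ≤ 2 + d → x i < k i)
    (hx' : ∀ i, 2 ≤ i → i + 1 ≤ 2 + d' → x' i < k i)
    (h : DZ q k 2 d x = DZ q k 2 d' x' ∨ DZ q k 2 d x = -DZ q k 2 d' x') :
    d = d' ∧ ∀ i, 2 ≤ i → i + 1 ≤ 2 + d → x i = x' i := by
  rcases le_total d' d with hle | hle
  · exact ((main q k hk d 2 x (by norm_num) hq1 hx).2.2 d' x' hle hq2 hx').2 hd hd' h
  · have := ((main q k hk d' 2 x' (by norm_num) hq2 hx').2.2 d x hle hq1 hx).2 hd' hd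
      (by rcases h with h | h
          · exact Or.inl h.symm
          · exact Or.inr (by omega))
    exact ⟨this.1.symm, fun i a b => (this.2 i a (by omega)).symm⟩

lemma psibounds (hk : ∀ i, 1 ≤ k i) {d : ℕ} {x : ℕ → ℕ} (hq1 : 2 + d ≤ q)
    (hx : ∀ i, 2 ≤ i → i + 1 ≤ 2 + d → x i < k i) :
    1 ≤ PsiZ q k 2 d x ∧ PsiZ q k 2 d x ≤ (hlvl q k 2 : ℤ) :=
  ⟨(main q k hk d 2 x (by norm_num) hq1 hx).1.1, (main q k hk d 2 x (by norm_num) hq1 hx).1.2.1⟩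

lemma dzbounds (hk : ∀ i, 1 ≤ k i) {d : ℕ} {x : ℕ → ℕ} (hd : 1 ≤ d) (hq1 : 2 + d ≤ q)
    (hx : ∀ i, 2 ≤ i → i + 1 ≤ 2 + d → x i < k i) :
    DZ q k 2 d x ≠ 0 ∧ -((hlvl q k 2 : ℤ) - 1) ≤ DZ q k 2 d x ∧
      DZ q k 2 d x ≤ (hlvl q k 2 : ℤ) - 1 :=
  (main q k hk d 2 x (by norm_num) hq1 hx).2.1 hd

end WA

namespace WA

variable {q : ℕ} {k : ℕ → ℕ}

lemma seqOf_lt (v : Vertex q k) (i : ℕ) (h1 : 1 ≤ i) (h2 : i ≤ v.1.val) : seqOf v i < k i := by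
  unfold seqOf
  split
  · rename_i h
    have key : ∀ (j : Fin v.1.val), j.val + 1 = i → (v.2 j).val < k i := by
      intro j hj
      have := (v.2 j).isLt
      rw [← hj]
      exact this
    refine key ⟨i - 1, h⟩ ?_
    show i - 1 + 1 = i
    omega
  · omega

lemma seqOf_big (v : Vertex q k) (i : ℕ) (h2 : v.1.val < i) : seqOf v i = 0 := by
  unfold seqOf
  split
  · rename_i h; omega
  · rfl

lemma seqOf_val (v : Vertex q k) (j : Fin v.1.val) : seqOf v (j.val + 1) = (v.2 j).val := by
  unfold seqOf
  split
  · rfl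
  · rename_i h
    exact absurd (show j.val + 1 - 1 < v.1.val by have := j.isLt; omega) h

lemma seqOf_one_le (v : Vertex q k) (hk1 : k 1 = 2) (hv : 1 ≤ v.1.val) : seqOf v 1 ≤ 1 := by
  have := seqOf_lt v 1 le_rfl hv
  omega

lemma parent_fst (v : Vertex q k) : (parent v).1.val = v.1.val - 1 := rfl

lemma seqOf_parent (v : Vertex q k) (i : ℕ) (h : i - 1 < v.1.val - 1) :
    seqOf (parent v) i = seqOf v i := by
  unfold seqOf
  have hp : (parent v).1.val = v.1.val - 1 := rfl
  split <;> split <;> rename_i h1 h2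
  · rfl
  · rw [hp] at h1; omega
  · rw [hp] at h1; omega
  · rfl

lemma vertex_eq_of (v w : Vertex q k) (h1 : v.1.val = w.1.val)
    (h2 : ∀ i, 1 ≤ i → i ≤ v.1.val → seqOf v i = seqOf w i) : v = w := by
  obtain ⟨a, f⟩ := v
  obtain ⟨b, g⟩ := w
  have hab : a = b := Fin.ext h1
  subst hab
  simp only at h1 h2
  have hfg : f = g := by
    funext j
    apply Fin.ext
    have hj := j.isLt
    have := h2 (j.val + 1) (by omega) (by omega)
    rw [seqOf_val ⟨a, f⟩ j, seqOf_val ⟨a, g⟩ j] at this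
    exact this
  rw [hfg]

/-- ε value of a non-root vertex. -/
def epsZ (v : Vertex q k) : ℤ :=
  if Even v.1.val then (seqOf v 1 : ℤ) else 1 - (seqOf v 1 : ℤ)

lemma epsZ01 (v : Vertex q k) (hk1 : k 1 = 2) (hv : 1 ≤ v.1.val) :
    epsZ v = 0 ∨ epsZ v = 1 := by
  have := seqOf_one_le v hk1 hv
  unfold epsZ
  split_ifs <;> omega

lemma flabel_root (v : Vertex q k) (h : v.1.val = 0) : flabel q k v = 0 := by
  unfold flabel level fOdd
  rw [h, if_neg (by decide)]
  rw [show (0:ℕ) + 1 - 1 = 0 by rfl, Finset.Icc_eq_empty (by omega)]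
  simp

lemma flabel_nonroot (hk : ∀ i, 1 ≤ k i) (hk1 : k 1 = 2) (v : Vertex q k)
    (hv : 1 ≤ v.1.val) :
    (flabel q k v : ℤ) = epsZ v * (hlvl q k 2 : ℤ) + PsiZ q k 2 (v.1.val - 1) (seqOf v) := by
  set r := v.1.val with hrdef
  have hrq : r + 1 ≤ q := v.1.isLt
  have hxok : ∀ i, 2 ≤ i → i + 1 ≤ 2 + (r - 1) → seqOf v i < k i :=
    fun i a b => seqOf_lt v i (by omega) (by omega)
  have hIcc : Finset.Icc 2 (2 + (r - 1) - 1) = Finset.Icc 2 r := by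
    congr 1; omega
  unfold flabel level epsZ
  rw [← hrdef]
  rcases Nat.even_or_odd r with he | ho
  · -- r even: level r+1 odd, fOdd
    have hmod : r % 2 = 0 := Nat.even_iff.mp he
    have hr2 : 2 ≤ r := by omega
    rw [if_neg (by rw [Nat.even_iff]; omega), if_pos he]
    unfold fOdd PsiZ
    rw [if_neg (by rw [Nat.even_iff]; omega)]
    unfold SZ
    rw [hIcc, show r + 1 - 1 = r by omega,
      show Finset.Icc 1 r = insert 1 (Finset.Icc 2 r) by
        ext t; simp [Finset.mem_Icc, Finset.mem_insert]; omega,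
      Finset.sum_insert (by simp [Finset.mem_Icc])]
    have hdiv : (r - 1 + 1) / 2 = (r + 1 - 1) / 2 := by omega
    push_cast [hdiv]
    ring
  · -- r odd: level r+1 even, fEven
    have hmod : r % 2 = 1 := Nat.odd_iff.mp ho
    rw [if_pos (by rw [Nat.even_iff]; omega), if_neg (by rw [Nat.even_iff]; omega)]
    unfold fEven PsiZ
    rw [if_pos (by rw [Nat.even_iff]; omega)]
    unfold SZ
    rw [hIcc, show r + 1 - 1 = r by omega, show r + 1 - 2 = r - 1 by omega]
    set Sn : ℕ := ∑ i ∈ Finset.Icc 2 r, seqOf v i * hlvl q k (i + 1) with hSndef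
    have hSZ : (∑ i ∈ Finset.Icc 2 r, (seqOf v i : ℤ) * (hlvl q k (i + 1) : ℤ)) = (Sn : ℤ) := by
      rw [hSndef]; push_cast; rfl
    rw [hSZ]
    have hx1 : seqOf v 1 ≤ 1 := seqOf_one_le v hk1 hv
    have hpsi1 : 1 ≤ PsiZ q k 2 (r - 1) (seqOf v) :=
      (psibounds q k hk (by omega) hxok).1
    have hSb : Sn + (r - 1) / 2 + 1 ≤ hlvl q k 2 := by
      unfold PsiZ at hpsi1
      rw [if_pos (by rw [Nat.even_iff]; omega)] at hpsi1
      unfold SZ at hpsi1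
      rw [hIcc, hSZ] at hpsi1
      omega
    have hA : hlvl q k 2 ≤ (k 1 - seqOf v 1) * hlvl q k 2 :=
      Nat.le_mul_of_pos_left _ (by omega)
    rw [Nat.sub_sub, Nat.cast_sub (by omega), hk1]
    push_cast [Nat.cast_sub (show seqOf v 1 ≤ 2 by omega)]
    ring

lemma flabel_parent (hk : ∀ i, 1 ≤ k i) (hk1 : k 1 = 2) (v : Vertex q k)
    (hv : 2 ≤ v.1.val) :
    (flabel q k (parent v) : ℤ) =
      (1 - epsZ v) * (hlvl q k 2 : ℤ) + PsiZ q k 2 (v.1.val - 2) (seqOf v) := by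
  rw [flabel_nonroot hk hk1 (parent v) (by rw [parent_fst]; omega)]
  have h1 : (parent v).1.val - 1 = v.1.val - 2 := by rw [parent_fst]; omega
  rw [h1]
  have h2 : PsiZ q k 2 (v.1.val - 2) (seqOf (parent v)) =
      PsiZ q k 2 (v.1.val - 2) (seqOf v) := by
    apply PsiZ_congr q k (by norm_num)
    intro i a b
    exact seqOf_parent v i (by rw [parent_fst] at *; omega)
  rw [h2]
  have h3 : epsZ (parent v) = 1 - epsZ v := by
    unfold epsZ
    have hseq : seqOf (parent v) 1 = seqOf v 1 := seqOf_parent v 1 (by omega)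
    rw [parent_fst, hseq]
    have hmod : (v.1.val - 1) % 2 = (v.1.val + 1) % 2 := by omega
    rcases Nat.even_or_odd v.1.val with he | ho
    · have h := Nat.even_iff.mp he
      rw [if_neg (by rw [Nat.even_iff]; omega), if_pos he]
    · have h := Nat.odd_iff.mp ho
      rw [if_pos (by rw [Nat.even_iff]; omega), if_neg (by rw [Nat.even_iff]; omega)]
      ring
  rw [h3]

lemma flabel_sub_parent_one (hk : ∀ i, 1 ≤ k i) (hk1 : k 1 = 2) (v : Vertex q k)
    (hv : v.1.val = 1) :
    (flabel q k v : ℤ) - (flabel q k (parent v) : ℤ) =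
      (2 - (seqOf v 1 : ℤ)) * (hlvl q k 2 : ℤ) := by
  rw [flabel_root (parent v) (by rw [parent_fst]; omega),
    flabel_nonroot hk hk1 v (by omega), hv]
  rw [show (1:ℕ) - 1 = 0 by rfl, PsiZ_zero q k 2 (by norm_num)]
  unfold epsZ
  rw [hv, if_neg (by decide)]
  push_cast
  ring

lemma flabel_sub_parent_ge2 (hk : ∀ i, 1 ≤ k i) (hk1 : k 1 = 2) (v : Vertex q k)
    (hv : 2 ≤ v.1.val) :
    (flabel q k v : ℤ) - (flabel q k (parent v) : ℤ) =
      (2 * epsZ v - 1) * (hlvl q k 2 : ℤ) + DZ q k 2 (v.1.val - 1) (seqOf v) := by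
  rw [flabel_nonroot hk hk1 v (by omega), flabel_parent hk hk1 v hv]
  unfold DZ
  rw [show v.1.val - 1 - 1 = v.1.val - 2 by omega]
  ring

end WA



/-- Lemma: for a rooted symmetric tree with daughter degree sequence
`(2, k 2, k 3, …)`, the graceful labelling `f` of Theorem 1 is a weakly
α-labelling with critical value `k = h 2`: it is graceful and every edge `xy`
(joining a non-root vertex to its parent) satisfies `f x ≤ h 2 ≤ f y` or
`f y ≤ h 2 ≤ f x`. -/
theorem weakly_alpha_of_k1_eq_two (q : ℕ) (k : ℕ → ℕ) (hq : 1 ≤ q)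
    (hk : ∀ i, 1 ≤ k i) (hk1 : k 1 = 2) :
    Function.Injective (flabel q k) ∧
    (∀ v : Vertex q k, flabel q k v ≤ hlvl q k 1 - 1) ∧
    (∀ v w : Vertex q k, 0 < v.1.val → 0 < w.1.val →
      glabel q k v = glabel q k w → v = w) ∧
    (∀ v : Vertex q k, 0 < v.1.val →
      (flabel q k v ≤ hlvl q k 2 ∧ hlvl q k 2 ≤ flabel q k (parent v)) ∨
      (flabel q k (parent v) ≤ hlvl q k 2 ∧ hlvl q k 2 ≤ flabel q k v)) := by
  have hH2 : (1:ℤ) ≤ (hlvl q k 2 : ℤ) := by exact_mod_cast WA.hlvl_pos q k 2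
  have hQ : ∀ v : Vertex q k, 1 ≤ v.1.val → 2 + (v.1.val - 1) ≤ q := by
    intro v hv; have := v.1.isLt; omega
  have hOK : ∀ v : Vertex q k, ∀ d : ℕ, d ≤ v.1.val - 1 →
      (∀ i, 2 ≤ i → i + 1 ≤ 2 + d → seqOf v i < k i) := by
    intro v d hd i a b
    exact WA.seqOf_lt v i (by omega) (by omega)
  refine ⟨?_, ?_, ?_, ?_⟩
  · -- injectivity of flabel
    intro v w h
    rcases Nat.eq_zero_or_pos v.1.val with hv | hv
    · rcases Nat.eq_zero_or_pos w.1.val with hw | hw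
      · exact WA.vertex_eq_of v w (by omega) (fun i h1 h2 => by omega)
      · exfalso
        have h0 : flabel q k v = 0 := WA.flabel_root v hv
        have hfw := WA.flabel_nonroot hk hk1 w hw
        have hb := WA.psibounds q k hk (hQ w hw) (hOK w _ le_rfl)
        have hE : ((flabel q k w : ℕ) : ℤ) = 0 := by rw [← h, h0]; norm_num
        rw [hfw] at hE
        rcases WA.epsZ01 w hk1 hw with he | he <;> rw [he] at hE <;>
          linarith [hb.1, hb.2]
    · rcases Nat.eq_zero_or_pos w.1.val with hw | hw
      · exfalso
        have h0 : flabel q k w = 0 := WA.flabel_root w hw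
        have hfv := WA.flabel_nonroot hk hk1 v hv
        have hb := WA.psibounds q k hk (hQ v hv) (hOK v _ le_rfl)
        have hE : ((flabel q k v : ℕ) : ℤ) = 0 := by rw [h, h0]; norm_num
        rw [hfv] at hE
        rcases WA.epsZ01 v hk1 hv with he | he <;> rw [he] at hE <;>
          linarith [hb.1, hb.2]
      · -- both nonroot
        have hfv := WA.flabel_nonroot hk hk1 v hv
        have hfw := WA.flabel_nonroot hk hk1 w hw
        have hbv := WA.psibounds q k hk (hQ v hv) (hOK v _ le_rfl)
        have hbw := WA.psibounds q k hk (hQ w hw) (hOK w _ le_rfl)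
        have hZ : WA.epsZ v * (hlvl q k 2 : ℤ) + WA.PsiZ q k 2 (v.1.val - 1) (seqOf v)
            = WA.epsZ w * (hlvl q k 2 : ℤ) + WA.PsiZ q k 2 (w.1.val - 1) (seqOf w) := by
          rw [← hfv, ← hfw]
          exact_mod_cast congrArg (Nat.cast : ℕ → ℤ) h
        have hem : WA.epsZ v = WA.epsZ w ∧
            WA.PsiZ q k 2 (v.1.val - 1) (seqOf v) = WA.PsiZ q k 2 (w.1.val - 1) (seqOf w) := by
          rcases WA.epsZ01 v hk1 hv with he1 | he1 <;>
            rcases WA.epsZ01 w hk1 hw with he2 | he2 <;>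
            rw [he1, he2] at hZ ⊢ <;> constructor <;>
            first
              | rfl
              | linarith [hbv.1, hbv.2, hbw.1, hbw.2]
        have hinj := WA.psiinj q k hk (hQ v hv) (hQ w hw) (hOK v _ le_rfl)
          (hOK w _ le_rfl) hem.2
        have hr : v.1.val = w.1.val := by omega
        have hx1 : seqOf v 1 = seqOf w 1 := by
          have he := hem.1
          unfold WA.epsZ at he
          rw [hr] at he
          split_ifs at he <;> omega
        apply WA.vertex_eq_of v w hr
        intro i h1 h2
        rcases eq_or_lt_of_le h1 with h1' | h1'
        · rw [← h1']; exact hx1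
        · exact hinj.2 i (by omega) (by omega)
  · -- upper bound
    intro v
    rcases Nat.eq_zero_or_pos v.1.val with hv | hv
    · rw [WA.flabel_root v hv]
      exact Nat.zero_le _
    · have hq2 : 1 + 1 ≤ q := by have := v.1.isLt; omega
      have hrec1 : (hlvl q k 1 : ℤ) = 1 + (k 1 : ℤ) * (hlvl q k 2 : ℤ) := by
        push_cast [WA.hlvl_rec q k 1 hq2]; ring
      rw [hk1] at hrec1
      push_cast at hrec1
      have hfv := WA.flabel_nonroot hk hk1 v hv
      have hb := WA.psibounds q k hk (hQ v hv) (hOK v _ le_rfl)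
      have hE : ((flabel q k v : ℕ) : ℤ) ≤ (hlvl q k 1 : ℤ) - 1 := by
        rw [hfv]
        rcases WA.epsZ01 v hk1 hv with he | he <;> rw [he] <;> linarith [hb.1, hb.2]
      omega
  · -- injectivity of glabel
    intro v w hv hw h
    unfold glabel at h
    have habs := Int.natAbs_eq_natAbs_iff.mp h
    rcases Nat.lt_or_ge v.1.val 2 with hv2 | hv2
    · have hv1 : v.1.val = 1 := by omega
      have hXv := WA.flabel_sub_parent_one hk hk1 v hv1
      have hav : seqOf v 1 ≤ 1 := WA.seqOf_one_le v hk1 hv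
      rcases Nat.lt_or_ge w.1.val 2 with hw2 | hw2
      · -- both level 2
        have hw1 : w.1.val = 1 := by omega
        have hXw := WA.flabel_sub_parent_one hk hk1 w hw1
        have haw : seqOf w 1 ≤ 1 := WA.seqOf_one_le w hk1 hw
        have hx1 : seqOf v 1 = seqOf w 1 := by
          rcases habs with he | he <;> rw [hXv, hXw] at he
          · have h0 : ((seqOf w 1 : ℤ) - (seqOf v 1 : ℤ)) * (hlvl q k 2 : ℤ) = 0 := by
              linear_combination he
            rcases mul_eq_zero.mp h0 with h1 | h1 <;> omega
          · have h0 : ((4 : ℤ) - (seqOf v 1 : ℤ) - (seqOf w 1 : ℤ)) * (hlvl q k 2 : ℤ)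
                = 0 := by linear_combination he
            rcases mul_eq_zero.mp h0 with h1 | h1 <;> omega
        apply WA.vertex_eq_of v w (by omega)
        intro i h1 h2
        have : i = 1 := by omega
        rw [this]; exact hx1
      · -- v level 2, w deeper: impossible
        exfalso
        have hXw := WA.flabel_sub_parent_ge2 hk hk1 w hw2
        have hDw := WA.dzbounds q k hk (show 1 ≤ w.1.val - 1 by omega) (hQ w hw)
          (hOK w _ le_rfl)
        rcases habs with he | he <;> rw [hXv, hXw] at he
        · have h0 : ((2 : ℤ) - (seqOf v 1 : ℤ) - (2 * WA.epsZ w - 1)) * (hlvl q k 2 : ℤ)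
              = WA.DZ q k 2 (w.1.val - 1) (seqOf w) := by linear_combination he
          exact hDw.1 (WA.helperA h0 hH2 hDw.2.1 hDw.2.2).2
        · have h0 : ((2 : ℤ) - (seqOf v 1 : ℤ) + (2 * WA.epsZ w - 1)) * (hlvl q k 2 : ℤ)
              = -WA.DZ q k 2 (w.1.val - 1) (seqOf w) := by linear_combination he
          have := (WA.helperA h0 hH2 (by linarith [hDw.2.2]) (by linarith [hDw.2.1])).2
          exact hDw.1 (by omega)
    · have hXv := WA.flabel_sub_parent_ge2 hk hk1 v hv2
      have hDv := WA.dzbounds q k hk (show 1 ≤ v.1.val - 1 by omega) (hQ v hv)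
        (hOK v _ le_rfl)
      rcases Nat.lt_or_ge w.1.val 2 with hw2 | hw2
      · -- w level 2, v deeper: impossible
        exfalso
        have hw1 : w.1.val = 1 := by omega
        have hXw := WA.flabel_sub_parent_one hk hk1 w hw1
        rcases habs with he | he <;> rw [hXv, hXw] at he
        · have h0 : ((2 : ℤ) - (seqOf w 1 : ℤ) - (2 * WA.epsZ v - 1)) * (hlvl q k 2 : ℤ)
              = WA.DZ q k 2 (v.1.val - 1) (seqOf v) := by linear_combination -he
          exact hDv.1 (WA.helperA h0 hH2 hDv.2.1 hDv.2.2).2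
        · have h0 : (-(2 : ℤ) + (seqOf w 1 : ℤ) - (2 * WA.epsZ v - 1)) * (hlvl q k 2 : ℤ)
              = WA.DZ q k 2 (v.1.val - 1) (seqOf v) := by linear_combination -he
          exact hDv.1 (WA.helperA h0 hH2 hDv.2.1 hDv.2.2).2
      · -- both deeper
        have hXw := WA.flabel_sub_parent_ge2 hk hk1 w hw2
        have hDw := WA.dzbounds q k hk (show 1 ≤ w.1.val - 1 by omega) (hQ w hw)
          (hOK w _ le_rfl)
        have hepsv := WA.epsZ01 v hk1 (by omega)
        have hepsw := WA.epsZ01 w hk1 (by omega)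
        have hcore : v.1.val = w.1.val ∧ WA.epsZ v = WA.epsZ w ∧
            (∀ i, 2 ≤ i → i + 1 ≤ 2 + (v.1.val - 1) → seqOf v i = seqOf w i) := by
          rcases habs with he | he <;> rw [hXv, hXw] at he
          · have h0 : ((2 * WA.epsZ v - 1) - (2 * WA.epsZ w - 1)) * (hlvl q k 2 : ℤ)
                = WA.DZ q k 2 (w.1.val - 1) (seqOf w) - WA.DZ q k 2 (v.1.val - 1) (seqOf v) := by
              linear_combination he
            have hB := WA.helperB h0 hH2 ⟨WA.epsZ v - WA.epsZ w, by ring⟩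
              (by linarith [hDv.2.1, hDv.2.2, hDw.2.1, hDw.2.2])
              (by linarith [hDv.2.1, hDv.2.2, hDw.2.1, hDw.2.2])
            have hdz := WA.dzinj q k hk (show 1 ≤ v.1.val - 1 by omega)
              (show 1 ≤ w.1.val - 1 by omega) (hQ v (by omega)) (hQ w (by omega))
              (hOK v _ le_rfl) (hOK w _ le_rfl) (Or.inl (by omega))
            exact ⟨by omega, by omega, hdz.2⟩
          · exfalso
            have h0 : ((2 * WA.epsZ v - 1) + (2 * WA.epsZ w - 1)) * (hlvl q k 2 : ℤ)
                = -(WA.DZ q k 2 (w.1.val - 1) (seqOf w) + WA.DZ q k 2 (v.1.val - 1) (seqOf v)) := by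
              linear_combination he
            have hB := WA.helperB h0 hH2 ⟨WA.epsZ v + WA.epsZ w - 1, by ring⟩
              (by linarith [hDv.2.1, hDv.2.2, hDw.2.1, hDw.2.2])
              (by linarith [hDv.2.1, hDv.2.2, hDw.2.1, hDw.2.2])
            have hdz := WA.dzinj q k hk (show 1 ≤ v.1.val - 1 by omega)
              (show 1 ≤ w.1.val - 1 by omega) (hQ v (by omega)) (hQ w (by omega))
              (hOK v _ le_rfl) (hOK w _ le_rfl) (Or.inr (by omega))
            have hrr : w.1.val - 1 = v.1.val - 1 := by omega
            have hE : WA.DZ q k 2 (v.1.val - 1) (seqOf v) = WA.DZ q k 2 (v.1.val - 1) (seqOf w) :=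
              WA.DZ_congr q k (by norm_num) hdz.2
            rw [hrr] at hB
            rw [hE] at hB
            have := hDw.1
            rw [hrr] at this
            omega
        obtain ⟨hr, heps, htail⟩ := hcore
        have hx1 : seqOf v 1 = seqOf w 1 := by
          unfold WA.epsZ at heps
          rw [hr] at heps
          split_ifs at heps <;> omega
        apply WA.vertex_eq_of v w hr
        intro i h1 h2
        rcases eq_or_lt_of_le h1 with h1' | h1'
        · rw [← h1']; exact hx1
        · exact htail i (by omega) (by omega)
  · -- weakly alpha property
    intro v hv
    rcases Nat.lt_or_ge v.1.val 2 with hv2 | hv2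
    · have hv1 : v.1.val = 1 := by omega
      right
      constructor
      · rw [WA.flabel_root (parent v) (by rw [WA.parent_fst]; omega)]
        exact Nat.zero_le _
      · have hXv := WA.flabel_sub_parent_one hk hk1 v hv1
        rw [WA.flabel_root (parent v) (by rw [WA.parent_fst]; omega)] at hXv
        have hav : seqOf v 1 ≤ 1 := WA.seqOf_one_le v hk1 hv
        have hp : (1:ℤ) * (hlvl q k 2 : ℤ) ≤ (2 - (seqOf v 1 : ℤ)) * (hlvl q k 2 : ℤ) :=
          mul_le_mul_of_nonneg_right (by omega) (by linarith)
        have : (hlvl q k 2 : ℤ) ≤ ((flabel q k v : ℕ) : ℤ) := by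
          push_cast at hXv
          linarith
        exact_mod_cast this
    · have hfv := WA.flabel_nonroot hk hk1 v hv
      have hfp := WA.flabel_parent hk hk1 v hv2
      have hbv := WA.psibounds q k hk (hQ v hv) (hOK v _ le_rfl)
      have hbp := WA.psibounds q k hk (d := v.1.val - 2) (by omega)
        (hOK v _ (by omega))
      rcases WA.epsZ01 v hk1 hv with he | he
      · left
        rw [he] at hfv hfp
        constructor
        · have : ((flabel q k v : ℕ) : ℤ) ≤ (hlvl q k 2 : ℤ) := by
            rw [hfv]; linarith [hbv.2]
          exact_mod_cast this
        · have : (hlvl q k 2 : ℤ) ≤ ((flabel q k (parent v) : ℕ) : ℤ) := by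
            rw [hfp]; linarith [hbp.1]
          exact_mod_cast this
      · right
        rw [he] at hfv hfp
        constructor
        · have : ((flabel q k (parent v) : ℕ) : ℤ) ≤ (hlvl q k 2 : ℤ) := by
            rw [hfp]; linarith [hbp.2]
          exact_mod_cast this
        · have : (hlvl q k 2 : ℤ) ≤ ((flabel q k v : ℕ) : ℤ) := by
            rw [hfv]; linarith [hbv.1]
          exact_mod_cast this
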